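/- Let f be a nonnegative measurable function on R^3 x R^3 with finite L^{1+1/k} norm (0 < k < 7/2) and finite kinetic energy E_kin(f) = (1/2)∫∫ |v|^2 f dv dx. Then the induced spatial density ρ_f(x) = ∫ f(x,v) dv belongs to L^{1+1/n}(R^3) with n = k + 3/2, and ||ρ_f||_{1+1/n} ≤ C ||f||_{1+1/k}^{(k+1)/(n+1)} E_kin(f)^{3/(2k+5)} for a universal constant C. -/

import Mathlib

open MeasureTheory Filter Metric
open scoped ENNReal Topology
noncomputable section

abbrev E3 := EuclideanSpace ℝ (Fin 3)

/-- The spatial density induced by a phase-space density on `ℝ³ × ℝ³`. -/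
def spatialDensity (f : E3 × E3 → ℝ) (x : E3) : ℝ := ∫ v, f (x, v)

/-- The kinetic energy `(1/2)∫∫ |v|² f dv dx`. -/
def kineticEnergy (f : E3 × E3 → ℝ) : ℝ := (1/2) * ∫ p, ‖p.2‖^2 * f p

lemma rpow_one_sub_helper (x : ℝ≥0∞) (hx : x ≠ 0) (hx' : x ≠ ⊤) (c : ℝ) :
    x * (x ^ c)⁻¹ = x ^ (1 - c) := by
  rw [sub_eq_add_neg, ENNReal.rpow_add _ _ hx hx', ENNReal.rpow_one, ENNReal.rpow_neg]

lemma opt_lemma {α β : ℝ} (hα : 0 < α) (hβ : 0 < β) (P a b : ℝ≥0∞)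
    (ha : a ≠ ∞) (hb : b ≠ ∞)
    (h : ∀ R : ℝ, 0 < R → P ≤ a * ENNReal.ofReal R ^ α + b * ENNReal.ofReal R ^ (-β)) :
    P ≤ 2 * a ^ (β / (α + β)) * b ^ (α / (α + β)) := by
  have hαβ : 0 < α + β := by linarith
  rcases eq_or_ne a 0 with ha0 | ha0
  · -- P = 0 : let R → ∞
    have hP : P ≤ 0 := by
      have h3 : Tendsto (fun R : ℝ => ENNReal.ofReal R ^ (-β)) atTop (𝓝 0) := by
        have h4 : Tendsto (fun R : ℝ => ENNReal.ofReal R ^ β) atTop (𝓝 ⊤) :=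
          (ENNReal.tendsto_rpow_at_top hβ).comp ENNReal.tendsto_ofReal_atTop
        have h5 : Tendsto (fun R : ℝ => (ENNReal.ofReal R ^ β)⁻¹) atTop (𝓝 (⊤ : ℝ≥0∞)⁻¹) :=
          ENNReal.tendsto_inv_iff.2 h4
        simp only [ENNReal.inv_top] at h5
        refine h5.congr fun R => ?_
        rw [ENNReal.rpow_neg]
      have htend : Tendsto (fun R : ℝ => b * ENNReal.ofReal R ^ (-β)) atTop (𝓝 0) := by
        simpa using ENNReal.Tendsto.const_mul h3 (Or.inr hb)
      refine ge_of_tendsto htend ?_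
      filter_upwards [eventually_gt_atTop 0] with R hR
      simpa [ha0] using h R hR
    simp [le_antisymm hP zero_le]
  rcases eq_or_ne b 0 with hb0 | hb0
  · -- P = 0 : let R → 0⁺
    have hP : P ≤ 0 := by
      have h3 : Tendsto (fun R : ℝ => a * ENNReal.ofReal R ^ α) (𝓝[>] (0:ℝ)) (𝓝 0) := by
        have h4 : Tendsto (fun R : ℝ => R ^ α) (𝓝[>] (0:ℝ)) (𝓝 0) := by
          have : ContinuousAt (fun R : ℝ => R ^ α) 0 :=
            Real.continuousAt_rpow_const 0 α (Or.inr hα.le)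
          have h4a := this.tendsto.mono_left (nhdsWithin_le_nhds (s := Set.Ioi (0:ℝ)))
          simpa [Real.zero_rpow hα.ne'] using h4a
        have h5 : Tendsto (fun R : ℝ => ENNReal.ofReal (R ^ α)) (𝓝[>] (0:ℝ)) (𝓝 0) := by
          simpa using ENNReal.tendsto_ofReal h4
        have h6 : Tendsto (fun R : ℝ => ENNReal.ofReal R ^ α) (𝓝[>] (0:ℝ)) (𝓝 0) := by
          refine h5.congr' ?_
          filter_upwards [self_mem_nhdsWithin] with R hR
          exact (ENNReal.ofReal_rpow_of_pos hR).symm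
        simpa using ENNReal.Tendsto.const_mul h6 (Or.inr ha)
      refine ge_of_tendsto h3 ?_
      filter_upwards [self_mem_nhdsWithin] with R hR
      simpa [hb0] using h R hR
    simp [le_antisymm hP zero_le]
  -- main case
  set θ := β / (α + β) with hθdef
  have hθ : 0 < θ := div_pos hβ hαβ
  have hθ1 : θ < 1 := by rw [hθdef, div_lt_one hαβ]; linarith
  have h1θ : α / (α + β) = 1 - θ := by rw [hθdef]; field_simp; ring
  have hbat : b / a ≠ ∞ := by simp [ENNReal.div_eq_top, ha0, hb]
  have hba : b / a ≠ 0 := by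
    simp only [ne_eq, ENNReal.div_eq_zero_iff, not_or]
    exact ⟨hb0, ha⟩
  set t : ℝ≥0∞ := b / a with htdef
  set R : ℝ := t.toReal ^ (1 / (α + β)) with hRdef
  have htpos : 0 < t.toReal := ENNReal.toReal_pos hba hbat
  have hR : 0 < R := Real.rpow_pos_of_pos htpos _
  have hof : ENNReal.ofReal R = t ^ (1 / (α + β)) := by
    rw [hRdef, ← ENNReal.ofReal_rpow_of_pos htpos, ENNReal.ofReal_toReal hbat]
  have key := h R hR
  rw [hof, ← ENNReal.rpow_mul, ← ENNReal.rpow_mul] at key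
  have e1 : 1 / (α + β) * α = 1 - θ := by rw [hθdef]; field_simp; ring
  have e2 : 1 / (α + β) * (-β) = -θ := by rw [hθdef]; field_simp
  rw [e1, e2] at key
  have hta : t ^ (1 - θ) = b ^ (1 - θ) * (a ^ (1 - θ))⁻¹ := by
    rw [htdef, ENNReal.div_rpow_of_nonneg _ _ (by linarith), div_eq_mul_inv]
  have htb : t ^ (-θ) = a ^ θ * (b ^ θ)⁻¹ := by
    rw [htdef, ENNReal.rpow_neg, ENNReal.div_rpow_of_nonneg _ _ hθ.le,
      ENNReal.inv_div (Or.inl (by simp [ENNReal.rpow_eq_top_iff, ha0, ha, hθ, hθ.not_gt]))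
        (Or.inl (by simp [ENNReal.rpow_eq_zero_iff, ha0, ha, hθ, hθ.not_gt])), div_eq_mul_inv]
  have haθ : a * t ^ (1 - θ) = a ^ θ * b ^ (1 - θ) := by
    rw [hta, ← mul_assoc, mul_comm a, mul_assoc, mul_comm (b ^ (1 - θ)),
      rpow_one_sub_helper a ha0 ha, sub_sub_cancel]
  have hbθ : b * t ^ (-θ) = a ^ θ * b ^ (1 - θ) := by
    rw [htb, mul_comm b, mul_assoc, mul_comm ((b ^ θ)⁻¹), rpow_one_sub_helper b hb0 hb]
  calc P ≤ a * t ^ (1 - θ) + b * t ^ (-θ) := key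
    _ = 2 * a ^ θ * b ^ (1 - θ) := by rw [haθ, hbθ]; ring
    _ = 2 * a ^ (β / (α + β)) * b ^ (α / (α + β)) := by rw [h1θ]

lemma split_bound {k : ℝ} (hk : 0 < k) (φ : E3 → ℝ≥0∞) (hφ : Measurable φ)
    {R : ℝ} (hR : 0 < R) :
    ∫⁻ v, φ v ≤
      (volume (ball (0:E3) 1)) ^ (1/(k+1)) * (∫⁻ v, φ v ^ (1+1/k)) ^ (k/(k+1))
        * ENNReal.ofReal R ^ (3/(k+1)) +
      (∫⁻ v, ENNReal.ofReal (‖v‖^2) * φ v) * ENNReal.ofReal R ^ (-(2:ℝ)) := by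
  have hk1 : (0:ℝ) < k + 1 := by linarith
  have hm : Real.HolderConjugate (1 + 1/k) (k+1) := by
    refine Real.holderConjugate_iff.2 ⟨?_, ?_⟩
    · have : 0 < 1/k := by positivity
      linarith
    · rw [inv_eq_one_div, inv_eq_one_div]
      field_simp
  rw [← lintegral_add_compl φ (measurableSet_ball (x := (0:E3)) (ε := R))]
  gcongr
  · -- ball part
    have hH := ENNReal.lintegral_mul_le_Lp_mul_Lq (volume.restrict (ball (0:E3) R)) hm
      hφ.aemeasurable (aemeasurable_const (b := (1:ℝ≥0∞)))
    simp only [Pi.mul_apply, mul_one, ENNReal.one_rpow, lintegral_const, one_mul,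
      Measure.restrict_apply MeasurableSet.univ, Set.univ_inter] at hH
    calc ∫⁻ v in ball (0:E3) R, φ v
        ≤ (∫⁻ v in ball (0:E3) R, φ v ^ (1+1/k)) ^ (1/(1+1/k))
            * (volume (ball (0:E3) R)) ^ (1/(k+1)) := hH
      _ ≤ (∫⁻ v, φ v ^ (1+1/k)) ^ (1/(1+1/k))
            * (volume (ball (0:E3) R)) ^ (1/(k+1)) := by
          gcongr
          exact Measure.restrict_le_self
      _ = (volume (ball (0:E3) 1)) ^ (1/(k+1)) * (∫⁻ v, φ v ^ (1+1/k)) ^ (k/(k+1))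
            * ENNReal.ofReal R ^ (3/(k+1)) := by
          rw [Measure.addHaar_ball volume (0:E3) hR.le]
          have hfr : Module.finrank ℝ E3 = 3 := by
            simpa using finrank_euclideanSpace_fin (n := 3) (𝕜 := ℝ)
          rw [hfr]
          rw [ENNReal.mul_rpow_of_nonneg _ _ (by positivity)]
          have h1k : 1/(1 + 1/k) = k/(k+1) := by field_simp
          have h3 : ENNReal.ofReal (R ^ 3) ^ (1/(k+1)) = ENNReal.ofReal R ^ (3/(k+1)) := by
            rw [← Real.rpow_natCast R 3, ← ENNReal.ofReal_rpow_of_pos hR,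
              ← ENNReal.rpow_mul]
            congr 1
            push_cast
            ring
          rw [h1k, h3]
          ring
  · -- complement part
    calc ∫⁻ v in (ball (0:E3) R)ᶜ, φ v
        ≤ ∫⁻ v in (ball (0:E3) R)ᶜ, ENNReal.ofReal R ^ (-(2:ℝ))
            * (ENNReal.ofReal (‖v‖^2) * φ v) := by
          refine setLIntegral_mono (by fun_prop) ?_
          intro v hv
          have hRv : R ≤ ‖v‖ := by
            simpa [mem_ball, dist_eq_norm, not_lt] using hv
          have hne0 : ENNReal.ofReal R ^ (2:ℝ) ≠ 0 := by
            simp [ENNReal.rpow_eq_zero_iff, ENNReal.ofReal_pos.2 hR,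
              (ENNReal.ofReal_pos.2 hR).ne']
          have hnet : ENNReal.ofReal R ^ (2:ℝ) ≠ ⊤ :=
            ENNReal.rpow_ne_top_of_nonneg (by norm_num) ENNReal.ofReal_ne_top
          have hle : ENNReal.ofReal R ^ (2:ℝ) ≤ ENNReal.ofReal (‖v‖^2) := by
            rw [show ((2:ℝ)) = ((2:ℕ):ℝ) by norm_num, ENNReal.ofReal_rpow_of_pos hR,
              Real.rpow_natCast]
            exact ENNReal.ofReal_le_ofReal (by
              have := pow_le_pow_left₀ hR.le hRv 2
              simpa using this)
          have h1 : (1:ℝ≥0∞) ≤ ENNReal.ofReal R ^ (-(2:ℝ)) * ENNReal.ofReal (‖v‖^2) := by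
            rw [ENNReal.rpow_neg]
            calc (1:ℝ≥0∞) = (ENNReal.ofReal R ^ (2:ℝ))⁻¹ * (ENNReal.ofReal R ^ (2:ℝ)) :=
                  (ENNReal.inv_mul_cancel hne0 hnet).symm
              _ ≤ _ := by gcongr
          calc φ v = 1 * φ v := (one_mul _).symm
            _ ≤ (ENNReal.ofReal R ^ (-(2:ℝ)) * ENNReal.ofReal (‖v‖^2)) * φ v :=
                mul_le_mul_left h1 _
            _ = ENNReal.ofReal R ^ (-(2:ℝ)) * (ENNReal.ofReal (‖v‖^2) * φ v) := by
                rw [mul_assoc]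
      _ ≤ (∫⁻ v, ENNReal.ofReal (‖v‖^2) * φ v) * ENNReal.ofReal R ^ (-(2:ℝ)) := by
          rw [lintegral_const_mul _ (by fun_prop), mul_comm]
          gcongr
          exact Measure.restrict_le_self
set_option maxHeartbeats 1000000 in
/-- for `0 < k < 7/2` and `n = k + 3/2`, a nonnegative `f` with finite
`L^{1+1/k}` norm and finite kinetic energy induces a density `ρ_f ∈ L^{1+1/n}(ℝ³)` with
`‖ρ_f‖_{1+1/n} ≤ C ‖f‖_{1+1/k}^{(k+1)/(n+1)} E_kin(f)^{3/(2k+5)}`. -/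
theorem statement0 :
    ∃ C : ℝ, 0 < C ∧ ∀ (k : ℝ), 0 < k → k < 7/2 →
    ∀ f : E3 × E3 → ℝ, Measurable f → (∀ p, 0 ≤ f p) →
    Integrable (fun p => f p ^ (1 + 1/k)) →
    Integrable (fun p => ‖p.2‖^2 * f p) →
    Integrable (fun x => spatialDensity f x ^ (1 + 1/(k + 3/2))) ∧
    (∫ x, spatialDensity f x ^ (1 + 1/(k + 3/2))) ^ ((k + 3/2)/(k + 3/2 + 1)) ≤
      C * ((∫ p, f p ^ (1 + 1/k)) ^ (k/(k+1))) ^ ((k+1)/(k + 3/2 + 1)) *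
        kineticEnergy f ^ (3/(2*k + 5)) := by
  set c1 : ℝ≥0∞ := volume (ball (0:E3) 1) with hc1
  have hc1top : c1 ≠ ⊤ := measure_ball_lt_top.ne
  refine ⟨4 * (1 + c1.toReal), by positivity, ?_⟩
  intro k hk hk7 f hf hf0 hfm hfe
  -- basic positivity
  have hk1 : (0:ℝ) < k + 1 := by linarith
  have h2k3 : (0:ℝ) < 2*k + 3 := by linarith
  have h2k5 : (0:ℝ) < 2*k + 5 := by linarith
  have hk32 : (0:ℝ) < k + 3/2 := by linarith
  set m : ℝ := 1 + 1/k with hmdef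
  set q : ℝ := 1 + 1/(k + 3/2) with hqdef
  set s : ℝ := (k + 3/2)/(k + 3/2 + 1) with hsdef
  have hm0 : 0 ≤ m := by rw [hmdef]; positivity
  have hq0 : 0 < q := by rw [hqdef]; positivity
  have hs0 : 0 < s := by rw [hsdef]; positivity
  have hqs : q * s = 1 := by rw [hqdef, hsdef]; field_simp
  set u : ℝ := 2*k/(2*k+3) with hudef
  set w : ℝ := 3/(2*k+3) with hwdef
  have hu0 : 0 < u := by rw [hudef]; positivity
  have hw0 : 0 < w := by rw [hwdef]; positivity
  have huw : u + w = 1 := by rw [hudef, hwdef]; field_simp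
  set ec : ℝ := 2/(2*k+3) with hecdef
  -- ENNReal-valued functions
  set F : E3 × E3 → ℝ≥0∞ := fun p => ENNReal.ofReal (f p) with hFdef
  have hF : Measurable F := ENNReal.measurable_ofReal.comp hf
  set G : E3 → ℝ≥0∞ := fun x => ∫⁻ v, F (x, v) ^ m with hGdef
  set H : E3 → ℝ≥0∞ := fun x => ∫⁻ v, ENNReal.ofReal (‖v‖^2) * F (x, v) with hHdef
  set P : E3 → ℝ≥0∞ := fun x => ∫⁻ v, F (x, v) with hPdef
  have hFm : Measurable fun p : E3 × E3 => F p ^ m := hF.pow measurable_const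
  have hFe : Measurable fun p : E3 × E3 => ENNReal.ofReal (‖p.2‖^2) * F p := by fun_prop
  have hGmeas : Measurable G := hFm.lintegral_prod_right'
  have hHmeas : Measurable H := hFe.lintegral_prod_right'
  have hPmeas : Measurable P := hF.lintegral_prod_right'
  -- finiteness of ∫G and ∫H
  have hGint : ∫⁻ x, G x = ∫⁻ p, ENNReal.ofReal (f p ^ m) := by
    rw [hGdef]
    have hmm : Measurable fun p : E3 × E3 => ENNReal.ofReal (f p ^ m) :=
      ENNReal.measurable_ofReal.comp (hf.pow measurable_const)
    have h2 := lintegral_prod (fun p : E3 × E3 => ENNReal.ofReal (f p ^ m))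
      (by rw [← Measure.volume_eq_prod E3 E3]; exact hmm.aemeasurable)
    rw [← Measure.volume_eq_prod E3 E3] at h2
    rw [h2]
    exact lintegral_congr fun x => lintegral_congr fun v =>
      ENNReal.ofReal_rpow_of_nonneg (hf0 _) hm0
  have hHint : ∫⁻ x, H x = ∫⁻ p, ENNReal.ofReal (‖p.2‖^2 * f p) := by
    rw [hHdef]
    have hmm : Measurable fun p : E3 × E3 => ENNReal.ofReal (‖p.2‖^2 * f p) :=
      ENNReal.measurable_ofReal.comp ((measurable_snd.norm.pow_const 2).mul hf)
    have h2 := lintegral_prod (fun p : E3 × E3 => ENNReal.ofReal (‖p.2‖^2 * f p))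
      (by rw [← Measure.volume_eq_prod E3 E3]; exact hmm.aemeasurable)
    rw [← Measure.volume_eq_prod E3 E3] at h2
    rw [h2]
    exact lintegral_congr fun x => lintegral_congr fun v =>
      (ENNReal.ofReal_mul (by positivity)).symm
  have hGfin : ∫⁻ x, G x ≠ ⊤ := by rw [hGint]; exact hfm.lintegral_lt_top.ne
  have hHfin : ∫⁻ x, H x ≠ ⊤ := by rw [hHint]; exact hfe.lintegral_lt_top.ne
  -- pointwise bound, a.e.
  have hθeq : (2:ℝ) / (3/(k+1) + 2) = 2*(k+1)/(2*k+5) := by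
    rw [div_eq_div_iff (by positivity) (by positivity)]; field_simp; ring
  have hτeq : (3/(k+1)) / (3/(k+1) + 2) = 3/(2*k+5) := by
    rw [div_eq_div_iff (by positivity) (by positivity)]; field_simp; ring
  have hkey : ∀ᵐ x, P x ≤ 2 * (c1 ^ (1/(k+1)) * G x ^ (k/(k+1))) ^ (2*(k+1)/(2*k+5))
      * H x ^ (3/(2*k+5)) := by
    filter_upwards [ae_lt_top hGmeas hGfin, ae_lt_top hHmeas hHfin] with x hGx hHx
    have ha : c1 ^ (1/(k+1)) * G x ^ (k/(k+1)) ≠ ⊤ :=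
      ENNReal.mul_ne_top (ENNReal.rpow_ne_top_of_nonneg (by positivity) hc1top)
        (ENNReal.rpow_ne_top_of_nonneg (by positivity) hGx.ne)
    have h := opt_lemma (α := 3/(k+1)) (β := 2) (by positivity) (by norm_num)
      (P x) _ (H x) ha hHx.ne ?_
    · rwa [hθeq, hτeq] at h
    · intro R hR
      have := split_bound hk (fun v => F (x, v)) (hF.comp measurable_prodMk_left) hR
      exact this
  -- pointwise bound on P^q
  have hexpc : 1/(k+1) * (2*(k+1)/(2*k+5)) * q = ec := by
    rw [hqdef, hecdef]; field_simp; ring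
  have hexpg : k/(k+1) * (2*(k+1)/(2*k+5)) * q = u := by
    rw [hqdef, hudef]; field_simp; ring
  have hexph : 3/(2*k+5) * q = w := by
    rw [hqdef, hwdef]; field_simp; ring
  have hkeyq : ∀ᵐ x, P x ^ q ≤ 2 ^ q * c1 ^ ec * (G x ^ u * H x ^ w) := by
    filter_upwards [hkey] with x hx
    calc P x ^ q ≤ (2 * (c1 ^ (1/(k+1)) * G x ^ (k/(k+1))) ^ (2*(k+1)/(2*k+5))
          * H x ^ (3/(2*k+5))) ^ q := ENNReal.rpow_le_rpow hx hq0.le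
      _ = 2 ^ q * c1 ^ ec * (G x ^ u * H x ^ w) := by
          rw [ENNReal.mul_rpow_of_nonneg _ _ (by positivity : (0:ℝ) ≤ 2*(k+1)/(2*k+5)),
            ← ENNReal.rpow_mul c1, ← ENNReal.rpow_mul (G x),
            ENNReal.mul_rpow_of_nonneg _ _ hq0.le,
            ENNReal.mul_rpow_of_nonneg _ _ hq0.le,
            ENNReal.mul_rpow_of_nonneg _ _ hq0.le,
            ← ENNReal.rpow_mul c1, ← ENNReal.rpow_mul (G x), ← ENNReal.rpow_mul (H x),
            hexpc, hexpg, hexph]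
          ring
  -- integrate
  have hGu : Measurable fun x => G x ^ u := hGmeas.pow_const u
  have hHw : Measurable fun x => H x ^ w := hHmeas.pow_const w
  have hmeasGH : Measurable fun x => G x ^ u * H x ^ w := hGu.mul hHw
  have hconj2 : Real.HolderConjugate (1/u) (1/w) := by
    refine Real.holderConjugate_iff.2 ⟨?_, ?_⟩
    · rw [lt_div_iff₀ hu0, one_mul]; linarith
    · simp only [one_div, inv_inv]; linarith
  have hHold : ∫⁻ x, G x ^ u * H x ^ w ≤ (∫⁻ x, G x) ^ u * (∫⁻ x, H x) ^ w := by
    have h := ENNReal.lintegral_mul_le_Lp_mul_Lq volume hconj2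
      (f := fun x => G x ^ u) (g := fun x => H x ^ w) hGu.aemeasurable hHw.aemeasurable
    simp only [Pi.mul_apply] at h
    have e1 : ∀ x, (G x ^ u) ^ (1/u) = G x := fun x => by
      rw [← ENNReal.rpow_mul, mul_one_div_cancel hu0.ne', ENNReal.rpow_one]
    have e2 : ∀ x, (H x ^ w) ^ (1/w) = H x := fun x => by
      rw [← ENNReal.rpow_mul, mul_one_div_cancel hw0.ne', ENNReal.rpow_one]
    simp_rw [e1, e2, one_div_one_div] at h
    exact h
  have hIPQ : ∫⁻ x, P x ^ q ≤ 2 ^ q * c1 ^ ec * ((∫⁻ x, G x) ^ u * (∫⁻ x, H x) ^ w) := by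
    calc ∫⁻ x, P x ^ q ≤ ∫⁻ x, 2 ^ q * c1 ^ ec * (G x ^ u * H x ^ w) :=
          lintegral_mono_ae hkeyq
      _ = 2 ^ q * c1 ^ ec * ∫⁻ x, G x ^ u * H x ^ w :=
          lintegral_const_mul _ hmeasGH
      _ ≤ _ := by gcongr
  have hRHSfin : 2 ^ q * c1 ^ ec * ((∫⁻ x, G x) ^ u * (∫⁻ x, H x) ^ w) ≠ ⊤ :=
    ENNReal.mul_ne_top
      (ENNReal.mul_ne_top (ENNReal.rpow_ne_top_of_nonneg hq0.le (by norm_num))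
        (ENNReal.rpow_ne_top_of_nonneg (by rw [hecdef]; positivity) hc1top))
      (ENNReal.mul_ne_top (ENNReal.rpow_ne_top_of_nonneg hu0.le hGfin)
        (ENNReal.rpow_ne_top_of_nonneg hw0.le hHfin))
  have hPQfin : ∫⁻ x, P x ^ q ≠ ⊤ := (lt_of_le_of_lt hIPQ hRHSfin.lt_top).ne
  -- spatial density in terms of P
  have hρ : ∀ x, spatialDensity f x = (P x).toReal := by
    intro x
    rw [spatialDensity, integral_eq_lintegral_of_nonneg_ae (ae_of_all _ fun v => hf0 _)
      ((hf.comp measurable_prodMk_left).aestronglyMeasurable)]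
  have hPfinae : ∀ᵐ x, P x ≠ ⊤ := by
    filter_upwards [hkey, ae_lt_top hGmeas hGfin, ae_lt_top hHmeas hHfin] with x hx hGx hHx
    refine (lt_of_le_of_lt hx ?_).ne
    refine ENNReal.mul_lt_top (ENNReal.mul_lt_top (by norm_num) ?_) ?_
    · exact (ENNReal.rpow_ne_top_of_nonneg (by positivity)
        (ENNReal.mul_ne_top (ENNReal.rpow_ne_top_of_nonneg (by positivity) hc1top)
          (ENNReal.rpow_ne_top_of_nonneg (by positivity) hGx.ne))).lt_top
    · exact (ENNReal.rpow_ne_top_of_nonneg (by positivity) hHx.ne).lt_top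
  have hofReal_ae : ∀ᵐ x, ENNReal.ofReal (spatialDensity f x ^ q) = P x ^ q := by
    filter_upwards [hPfinae] with x hx
    rw [hρ x, ENNReal.toReal_rpow, ENNReal.ofReal_toReal
      (ENNReal.rpow_ne_top_of_nonneg hq0.le hx)]
  -- integrability
  have hInt : Integrable (fun x => spatialDensity f x ^ q) := by
    constructor
    · have : (fun x => spatialDensity f x ^ q) = fun x => (P x).toReal ^ q :=
        funext fun x => by rw [hρ x]
      rw [this]
      exact ((ENNReal.measurable_toReal.comp hPmeas).pow measurable_const).aestronglyMeasurable
    · rw [hasFiniteIntegral_iff_ofReal (ae_of_all _ fun x => by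
        rw [hρ x]; positivity)]
      rw [lintegral_congr_ae hofReal_ae]
      exact hPQfin.lt_top
  refine ⟨hInt, ?_⟩
  -- the inequality
  have hIeq : ∫ x, spatialDensity f x ^ q = (∫⁻ x, P x ^ q).toReal := by
    rw [integral_eq_lintegral_of_nonneg_ae (ae_of_all _ fun x => by rw [hρ x]; positivity)
      hInt.aestronglyMeasurable]
    rw [lintegral_congr_ae hofReal_ae]
  -- raise hIPQ to power s
  have hfinal : (∫⁻ x, P x ^ q) ^ s ≤
      2 * c1 ^ (2/(2*k+5)) * ((∫⁻ x, G x) ^ (2*k/(2*k+5)) * (∫⁻ x, H x) ^ (3/(2*k+5))) := by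
    have h := ENNReal.rpow_le_rpow hIPQ hs0.le
    have hecs : ec * s = 2/(2*k+5) := by rw [hecdef, hsdef]; field_simp; ring
    have hus : u * s = 2*k/(2*k+5) := by rw [hudef, hsdef]; field_simp; ring
    have hws : w * s = 3/(2*k+5) := by rw [hwdef, hsdef]; field_simp; ring
    calc (∫⁻ x, P x ^ q) ^ s
        ≤ (2 ^ q * c1 ^ ec * ((∫⁻ x, G x) ^ u * (∫⁻ x, H x) ^ w)) ^ s := h
      _ = 2 * c1 ^ (2/(2*k+5)) * ((∫⁻ x, G x) ^ (2*k/(2*k+5)) * (∫⁻ x, H x) ^ (3/(2*k+5))) := by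
          rw [ENNReal.mul_rpow_of_nonneg _ _ hs0.le, ENNReal.mul_rpow_of_nonneg _ _ hs0.le,
            ENNReal.mul_rpow_of_nonneg _ _ hs0.le,
            ← ENNReal.rpow_mul, ← ENNReal.rpow_mul, ← ENNReal.rpow_mul, ← ENNReal.rpow_mul,
            hqs, hecs, hus, hws, ENNReal.rpow_one]
  -- real quantities
  set AG : ℝ := ∫ p, f p ^ m with hAGdef
  set AH : ℝ := ∫ p, ‖p.2‖^2 * f p with hAHdef
  have hAGeq : AG = (∫⁻ x, G x).toReal := by
    rw [hAGdef, hGint, integral_eq_lintegral_of_nonneg_ae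
      (ae_of_all _ fun p => Real.rpow_nonneg (hf0 p) m)
      (hf.pow measurable_const).aestronglyMeasurable]
  have hAHeq : AH = (∫⁻ x, H x).toReal := by
    rw [hAHdef, hHint, integral_eq_lintegral_of_nonneg_ae
      (ae_of_all _ fun p => mul_nonneg (by positivity) (hf0 p))
      (((measurable_snd.norm.pow_const 2).mul hf)).aestronglyMeasurable]
  have hAGnn : 0 ≤ AG := by rw [hAGeq]; exact ENNReal.toReal_nonneg
  have hAHnn : 0 ≤ AH := by rw [hAHeq]; exact ENNReal.toReal_nonneg
  have hE : kineticEnergy f = (1/2) * AH := rfl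
  have hEnn : 0 ≤ kineticEnergy f := by rw [hE]; linarith
  -- convert the ENNReal inequality to ℝ
  have hfinR : (∫ x, spatialDensity f x ^ q) ^ s ≤
      2 * (c1 ^ (2/(2*k+5))).toReal * (AG ^ (2*k/(2*k+5)) * AH ^ (3/(2*k+5))) := by
    rw [hIeq, ENNReal.toReal_rpow]
    have hRHS2fin : 2 * c1 ^ (2/(2*k+5)) *
        ((∫⁻ x, G x) ^ (2*k/(2*k+5)) * (∫⁻ x, H x) ^ (3/(2*k+5))) ≠ ⊤ :=
      ENNReal.mul_ne_top
        (ENNReal.mul_ne_top (by norm_num)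
          (ENNReal.rpow_ne_top_of_nonneg (by positivity) hc1top))
        (ENNReal.mul_ne_top (ENNReal.rpow_ne_top_of_nonneg (by positivity) hGfin)
          (ENNReal.rpow_ne_top_of_nonneg (by positivity) hHfin))
    have := ENNReal.toReal_mono hRHS2fin hfinal
    refine this.trans (le_of_eq ?_)
    rw [ENNReal.toReal_mul, ENNReal.toReal_mul, ENNReal.toReal_mul,
      ENNReal.toReal_ofNat, hAGeq, hAHeq, ENNReal.toReal_rpow, ENNReal.toReal_rpow]
  -- final arithmetic
  have hAHE : AH ^ (3/(2*k+5)) = 2 ^ (3/(2*k+5)) * kineticEnergy f ^ (3/(2*k+5)) := by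
    have : AH = 2 * kineticEnergy f := by rw [hE]; ring
    rw [this, Real.mul_rpow (by norm_num) hEnn]
  have hAGpow : (AG ^ (k/(k+1))) ^ ((k+1)/(k + 3/2 + 1)) = AG ^ (2*k/(2*k+5)) := by
    rw [← Real.rpow_mul hAGnn]
    congr 1
    field_simp
    ring
  have hc1tle : (c1 ^ (2/(2*k+5))).toReal ≤ 1 + c1.toReal := by
    rcases le_or_gt c1 1 with h1 | h1
    · have : c1 ^ (2/(2*k+5)) ≤ 1 := by
        calc c1 ^ (2/(2*k+5)) ≤ 1 ^ (2/(2*k+5)) :=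
              ENNReal.rpow_le_rpow h1 (by positivity)
          _ = 1 := ENNReal.one_rpow _
      calc (c1 ^ (2/(2*k+5))).toReal ≤ (1:ℝ≥0∞).toReal :=
            ENNReal.toReal_mono (by norm_num) this
        _ = 1 := by simp
        _ ≤ 1 + c1.toReal := by linarith [ENNReal.toReal_nonneg (a := c1)]
    · have : c1 ^ (2/(2*k+5)) ≤ c1 ^ (1:ℝ) := by
        apply ENNReal.rpow_le_rpow_of_exponent_le h1.le
        rw [div_le_one (by linarith)]; linarith
      calc (c1 ^ (2/(2*k+5))).toReal ≤ (c1 ^ (1:ℝ)).toReal :=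
            ENNReal.toReal_mono (by rw [ENNReal.rpow_one]; exact hc1top) this
        _ = c1.toReal := by rw [ENNReal.rpow_one]
        _ ≤ 1 + c1.toReal := by linarith
  have h2le : (2:ℝ) ^ (3/(2*k+5)) ≤ 2 := by
    calc (2:ℝ) ^ (3/(2*k+5)) ≤ (2:ℝ) ^ (1:ℝ) := by
          apply Real.rpow_le_rpow_of_exponent_le one_le_two
          rw [div_le_one (by linarith)]; linarith
      _ = 2 := Real.rpow_one 2
  have hc1tnn : 0 ≤ (c1 ^ (2/(2*k+5))).toReal := ENNReal.toReal_nonneg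
  calc (∫ x, spatialDensity f x ^ q) ^ s
      ≤ 2 * (c1 ^ (2/(2*k+5))).toReal * (AG ^ (2*k/(2*k+5)) * AH ^ (3/(2*k+5))) := hfinR
    _ = (2 * (c1 ^ (2/(2*k+5))).toReal * 2 ^ (3/(2*k+5))) *
          (AG ^ (2*k/(2*k+5)) * kineticEnergy f ^ (3/(2*k+5))) := by
        rw [hAHE]; ring
    _ ≤ (2 * (1 + c1.toReal) * 2) *
          (AG ^ (2*k/(2*k+5)) * kineticEnergy f ^ (3/(2*k+5))) := by
        have hnn : 0 ≤ AG ^ (2*k/(2*k+5)) * kineticEnergy f ^ (3/(2*k+5)) := by positivity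
        apply mul_le_mul_of_nonneg_right _ hnn
        have h20 : (0:ℝ) ≤ 2 ^ (3/(2*k+5)) := by positivity
        nlinarith [ENNReal.toReal_nonneg (a := c1)]
    _ = 4 * (1 + c1.toReal) * ((AG ^ (k/(k+1))) ^ ((k+1)/(k + 3/2 + 1)) *
          kineticEnergy f ^ (3/(2*k+5))) := by rw [hAGpow]; ring
    _ = 4 * (1 + c1.toReal) * ((AG ^ (k/(k+1))) ^ ((k+1)/(k + 3/2 + 1))) *
          kineticEnergy f ^ (3/(2*k+5)) := by ring
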